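/- Let S be a rectangular band semigroup and ω a weight on S. Then ℓ¹(S, ω) is amenable if and only if S is a singleton. -/

import Mathlib

open scoped TensorProduct
open Filter
open scoped Classical
set_option maxHeartbeats 1000000
set_option synthInstance.maxHeartbeats 400000

/-- A weight on a semigroup: strictly positive and submultiplicative. -/
def IsWeight {S : Type*} [Mul S] (ω : S → ℝ) : Prop :=
  (∀ s, 0 < ω s) ∧ ∀ s t, ω (s * t) ≤ ω s * ω t

/-- A characterization of the Beurling algebra `ℓ¹(S, ω)`: a Banach algebra `A`
together with point masses `delta` and coefficient functionals such that every
element is the ℓ¹-sum of its coefficients against the point masses, with the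
weighted ℓ¹-norm, and `delta` is multiplicative (`δ_s * δ_t = δ_{st}`). -/
structure BeurlingStructure (S : Type*) [Mul S] (ω : S → ℝ) (A : Type*)
    [NormedRing A] [NormedAlgebra ℂ A] where
  delta : S → A
  coeff : A →ₗ[ℂ] (S → ℂ)
  delta_mul : ∀ s t : S, delta s * delta t = delta (s * t)
  coeff_delta : ∀ s t : S, coeff (delta s) t = if t = s then 1 else 0
  hasSum_coeff : ∀ a : A, HasSum (fun s => coeff a s • delta s) a
  norm_eq : ∀ a : A, ‖a‖ = ∑' s, ‖coeff a s‖ * ω s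

/-- A pair of commuting continuous left/right module actions of a Banach algebra,
making `E` a Banach `A`-bimodule. -/
def IsBimodule {A : Type*} [NormedRing A] [NormedAlgebra ℂ A]
    {E : Type*} [NormedAddCommGroup E] [NormedSpace ℂ E]
    (l r : A →L[ℂ] E →L[ℂ] E) : Prop :=
  (∀ a b : A, l (a * b) = (l a).comp (l b)) ∧
  (∀ a b : A, r (a * b) = (r b).comp (r a)) ∧
  (∀ a b : A, (l a).comp (r b) = (r b).comp (l a))

/-- Amenability of a Banach algebra: every bounded derivation into the dual of a
Banach bimodule is inner.  (The dual bimodule actions are `(a·f)(x) = f(x·a)` and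
`(f·a)(x) = f(a·x)`.) -/
def IsAmenable (A : Type*) [NormedRing A] [NormedAlgebra ℂ A] : Prop :=
  ∀ (E : Type) [NormedAddCommGroup E] [NormedSpace ℂ E]
    (l r : A →L[ℂ] E →L[ℂ] E), IsBimodule l r →
    ∀ D : A →L[ℂ] (E →L[ℂ] ℂ),
      (∀ a b : A, D (a * b) = (D b).comp (r a) + (D a).comp (l b)) →
      ∃ f : E →L[ℂ] ℂ, ∀ a : A, D a = f.comp (r a) - f.comp (l a)

/-- The projective tensor norm of an element of the algebraic tensor product. -/
noncomputable def projNorm (A B : Type*) [NormedAddCommGroup A] [NormedSpace ℂ A]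
    [NormedAddCommGroup B] [NormedSpace ℂ B] (u : A ⊗[ℂ] B) : ℝ :=
  sInf {r : ℝ | ∃ (n : ℕ) (f : Fin n → A) (g : Fin n → B),
    u = ∑ i, f i ⊗ₜ[ℂ] g i ∧ r = ∑ i, ‖f i‖ * ‖g i‖}

/-- Left action `a • (x ⊗ y) = (a*x) ⊗ y` on `A ⊗ A`. -/
noncomputable def tmulLeft {A : Type*} [NormedRing A] [NormedAlgebra ℂ A] (a : A) :
    A ⊗[ℂ] A →ₗ[ℂ] A ⊗[ℂ] A :=
  TensorProduct.map (LinearMap.mulLeft ℂ a) LinearMap.id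

/-- Right action `(x ⊗ y) • a = x ⊗ (y*a)` on `A ⊗ A`. -/
noncomputable def tmulRight {A : Type*} [NormedRing A] [NormedAlgebra ℂ A] (a : A) :
    A ⊗[ℂ] A →ₗ[ℂ] A ⊗[ℂ] A :=
  TensorProduct.map LinearMap.id (LinearMap.mulRight ℂ a)

/-- Pseudo-amenability: existence of an approximate diagonal.  (Since the algebraic
tensor product is dense in `A ⊗̂ A` in the projective norm, the approximate diagonal
may be taken in the algebraic tensor product, with the module-action conditions
measured in the projective tensor norm.) -/
def IsPseudoAmenable (A : Type*) [NormedRing A] [NormedAlgebra ℂ A] : Prop :=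
  ∃ (ι : Type) (l : Filter ι), l.NeBot ∧ ∃ m : ι → A ⊗[ℂ] A,
    (∀ a : A, Tendsto (fun i => projNorm A A (tmulLeft a (m i) - tmulRight a (m i)))
        l (nhds 0)) ∧
    (∀ a : A, Tendsto (fun i => a * LinearMap.mul' ℂ A (m i)) l (nhds a))

/-- A witness for biprojectivity of `A`: a realization `X` of the completed projective
tensor product `A ⊗̂ A` (with its bimodule actions and multiplication map `pihat`),
together with a bounded bimodule homomorphism `rho : A → A ⊗̂ A` with `π ∘ ρ = id`. -/
structure BiprojectiveWitness (A : Type*) [NormedRing A] [NormedAlgebra ℂ A] where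
  X : Type
  [grp : NormedAddCommGroup X]
  [mod : NormedSpace ℂ X]
  [compl : CompleteSpace X]
  incl : A ⊗[ℂ] A →ₗ[ℂ] X
  dense_incl : DenseRange incl
  norm_incl : ∀ u, ‖incl u‖ = projNorm A A u
  lact : A →L[ℂ] X →L[ℂ] X
  ract : A →L[ℂ] X →L[ℂ] X
  bimod : IsBimodule lact ract
  lact_incl : ∀ (a : A) u, lact a (incl u) = incl (tmulLeft a u)
  ract_incl : ∀ (a : A) u, ract a (incl u) = incl (tmulRight a u)
  pihat : X →L[ℂ] A
  pihat_incl : ∀ u, pihat (incl u) = LinearMap.mul' ℂ A u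
  rho : A →L[ℂ] X
  rho_left : ∀ a b : A, rho (a * b) = lact a (rho b)
  rho_right : ∀ a b : A, rho (a * b) = ract b (rho a)
  pihat_rho : ∀ a : A, pihat (rho a) = a

attribute [instance] BiprojectiveWitness.grp BiprojectiveWitness.mod
  BiprojectiveWitness.compl

/-- `A` is biprojective. -/
def IsBiprojective (A : Type*) [NormedRing A] [NormedAlgebra ℂ A] : Prop :=
  Nonempty (BiprojectiveWitness A)

/-- A witness for biflatness of `A`: a realization `X` of `A ⊗̂ A` together with a
bounded bimodule homomorphism `rho : A → (A ⊗̂ A)**` with `π** ∘ ρ = k_A`. -/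
structure BiflatWitness (A : Type*) [NormedRing A] [NormedAlgebra ℂ A] where
  X : Type
  [grp : NormedAddCommGroup X]
  [mod : NormedSpace ℂ X]
  [compl : CompleteSpace X]
  incl : A ⊗[ℂ] A →ₗ[ℂ] X
  dense_incl : DenseRange incl
  norm_incl : ∀ u, ‖incl u‖ = projNorm A A u
  lact : A →L[ℂ] X →L[ℂ] X
  ract : A →L[ℂ] X →L[ℂ] X
  bimod : IsBimodule lact ract
  lact_incl : ∀ (a : A) u, lact a (incl u) = incl (tmulLeft a u)
  ract_incl : ∀ (a : A) u, ract a (incl u) = incl (tmulRight a u)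
  pihat : X →L[ℂ] A
  pihat_incl : ∀ u, pihat (incl u) = LinearMap.mul' ℂ A u
  rho : A →L[ℂ] ((X →L[ℂ] ℂ) →L[ℂ] ℂ)
  rho_left : ∀ (a b : A) (f : X →L[ℂ] ℂ), rho (a * b) f = rho b (f.comp (lact a))
  rho_right : ∀ (a b : A) (f : X →L[ℂ] ℂ), rho (a * b) f = rho a (f.comp (ract b))
  pihat_rho : ∀ (a : A) (g : A →L[ℂ] ℂ), rho a (g.comp pihat) = g a

/-- `A` is biflat. -/
def IsBiflat (A : Type*) [NormedRing A] [NormedAlgebra ℂ A] : Prop :=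
  Nonempty (BiflatWitness A)

/-- A realization of the completed projective tensor product `A ⊗̂ B` of two Banach
spaces: a Banach space in which the algebraic tensor product sits densely and
isometrically for the projective tensor norm. -/
structure ProjTensorWitness (A B : Type*) [NormedAddCommGroup A] [NormedSpace ℂ A]
    [NormedAddCommGroup B] [NormedSpace ℂ B] where
  X : Type
  [grp : NormedAddCommGroup X]
  [mod : NormedSpace ℂ X]
  [compl : CompleteSpace X]
  incl : A ⊗[ℂ] B →ₗ[ℂ] X
  dense_incl : DenseRange incl
  norm_incl : ∀ u, ‖incl u‖ = projNorm A B u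

attribute [instance] ProjTensorWitness.grp ProjTensorWitness.mod ProjTensorWitness.compl

/-- The principal ideal `S¹ s S¹` generated by `s`, inside the unitization `S¹`. -/
def principalIdeal {S : Type*} [Semigroup S] (s : S) : Set (WithOne S) :=
  {x | ∃ u v : WithOne S, x = u * (s : WithOne S) * v}

/-- The Green-type relation `s τ t ↔ S¹sS¹ = S¹tS¹`. -/
def bandTau {S : Type*} [Semigroup S] (s t : S) : Prop :=
  principalIdeal s = principalIdeal t

/-- Amenability of a (topological) group: existence of a left-invariant mean on the
bounded continuous functions. -/
def GroupIsAmenable (G : Type*) [Group G] [TopologicalSpace G] [IsTopologicalGroup G] :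
    Prop :=
  ∃ m : BoundedContinuousFunction G ℝ →L[ℝ] ℝ,
    m 1 = 1 ∧ (∀ f, 0 ≤ f → 0 ≤ m f) ∧
    ∀ (g : G) (f : BoundedContinuousFunction G ℝ),
      m (f.compContinuous ⟨fun x => g * x, continuous_mul_left g⟩) = m f

/-- A characterization of the Beurling algebra `L¹(G, ω)` of a locally compact group
with Haar measure `μ`: a Banach algebra `A` whose elements are represented by
`ω`-integrable functions on `G`, with the weighted `L¹` norm and convolution product. -/
structure GroupBeurlingStructure (G : Type*) [Group G] [MeasurableSpace G]
    (μ : MeasureTheory.Measure G) (ω : G → ℝ) (A : Type*) [NormedRing A] [NormedAlgebra ℂ A] where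
  toFun : A → G → ℂ
  integrable : ∀ a, MeasureTheory.Integrable (fun g => ‖toFun a g‖ * ω g) μ
  map_add : ∀ a b : A, toFun (a + b) =ᶠ[MeasureTheory.ae μ] toFun a + toFun b
  map_smul : ∀ (c : ℂ) (a : A), toFun (c • a) =ᶠ[MeasureTheory.ae μ] c • toFun a
  eq_zero : ∀ a : A, toFun a =ᶠ[MeasureTheory.ae μ] 0 → a = 0
  norm_eq : ∀ a : A, ‖a‖ = ∫ g, ‖toFun a g‖ * ω g ∂μ
  map_mul : ∀ a b : A, toFun (a * b) =ᶠ[MeasureTheory.ae μ]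
    fun x => ∫ t, toFun a t * toFun b (t⁻¹ * x) ∂μ
  surjective : ∀ f : G → ℂ, Measurable f →
    MeasureTheory.Integrable (fun g => ‖f g‖ * ω g) μ → ∃ a, toFun a =ᶠ[MeasureTheory.ae μ] f

section Aux
variable {A : Type} [NormedRing A] [NormedAlgebra ℂ A]

/-- left annihilator: a₀ * x = 0 for all x, but a₀ ≠ 0 ⇒ not amenable -/
lemma not_amenable_left (a₀ : A) (hla : ∀ x : A, a₀ * x = 0)
    (g : A →L[ℂ] ℂ) (hg : g a₀ ≠ 0) : ¬ IsAmenable A := by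
  intro ham
  let r : A →L[ℂ] (A →L[ℂ] ℂ) →L[ℂ] (A →L[ℂ] ℂ) :=
    ((ContinuousLinearMap.compL ℂ A A ℂ).flip).comp (ContinuousLinearMap.mul ℂ A)
  have hrapp : ∀ (a : A) (f : A →L[ℂ] ℂ) (x : A), r a f x = f (a * x) := fun a f x => rfl
  have hbm : IsBimodule (0 : A →L[ℂ] (A →L[ℂ] ℂ) →L[ℂ] (A →L[ℂ] ℂ)) r := by
    refine ⟨fun a b => by simp, fun a b => ?_, fun a b => by simp⟩
    ext f x
    simp [hrapp, mul_assoc]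
  have hder : ∀ a b : A, ContinuousLinearMap.apply ℂ ℂ (E := A) (a * b) =
      ((ContinuousLinearMap.apply ℂ ℂ (E := A)) b).comp (r a) +
      ((ContinuousLinearMap.apply ℂ ℂ (E := A)) a).comp
        ((0 : A →L[ℂ] (A →L[ℂ] ℂ) →L[ℂ] (A →L[ℂ] ℂ)) b) := by
    intro a b
    ext f
    simp only [ContinuousLinearMap.add_apply, ContinuousLinearMap.comp_apply,
      ContinuousLinearMap.apply_apply, ContinuousLinearMap.zero_apply, map_zero, add_zero, hrapp]
  obtain ⟨f, hf⟩ := ham (A →L[ℂ] ℂ) (0 : A →L[ℂ] (A →L[ℂ] ℂ) →L[ℂ] (A →L[ℂ] ℂ)) r hbm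
    (ContinuousLinearMap.apply ℂ ℂ (E := A)) hder
  have h0 : r a₀ = 0 := by
    ext f x; simp [hrapp, hla]
  have key := congrArg (fun T : (A →L[ℂ] ℂ) →L[ℂ] ℂ => T g) (hf a₀)
  simp only [ContinuousLinearMap.sub_apply, ContinuousLinearMap.comp_apply, h0,
    ContinuousLinearMap.apply_apply, ContinuousLinearMap.zero_apply, map_zero, sub_zero,
    sub_self] at key
  exact hg key

lemma not_amenable_right (a₀ : A) (hra : ∀ x : A, x * a₀ = 0)
    (g : A →L[ℂ] ℂ) (hg : g a₀ ≠ 0) : ¬ IsAmenable A := by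
  intro ham
  let l : A →L[ℂ] (A →L[ℂ] ℂ) →L[ℂ] (A →L[ℂ] ℂ) :=
    ((ContinuousLinearMap.compL ℂ A A ℂ).flip).comp ((ContinuousLinearMap.mul ℂ A).flip)
  have hlapp : ∀ (a : A) (f : A →L[ℂ] ℂ) (x : A), l a f x = f (x * a) := fun a f x => rfl
  have hbm : IsBimodule l (0 : A →L[ℂ] (A →L[ℂ] ℂ) →L[ℂ] (A →L[ℂ] ℂ)) := by
    refine ⟨fun a b => ?_, fun a b => by simp, fun a b => by simp⟩
    ext f x
    simp [hlapp, mul_assoc]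
  have hder : ∀ a b : A, ContinuousLinearMap.apply ℂ ℂ (E := A) (a * b) =
      ((ContinuousLinearMap.apply ℂ ℂ (E := A)) b).comp
        ((0 : A →L[ℂ] (A →L[ℂ] ℂ) →L[ℂ] (A →L[ℂ] ℂ)) a) +
      ((ContinuousLinearMap.apply ℂ ℂ (E := A)) a).comp (l b) := by
    intro a b
    ext f
    simp only [ContinuousLinearMap.add_apply, ContinuousLinearMap.comp_apply,
      ContinuousLinearMap.apply_apply, ContinuousLinearMap.zero_apply, map_zero, zero_add, hlapp]
  obtain ⟨f, hf⟩ := ham (A →L[ℂ] ℂ) l (0 : A →L[ℂ] (A →L[ℂ] ℂ) →L[ℂ] (A →L[ℂ] ℂ)) hbm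
    (ContinuousLinearMap.apply ℂ ℂ (E := A)) hder
  have h0 : l a₀ = 0 := by
    ext f x; simp [hlapp, hra]
  have key := congrArg (fun T : (A →L[ℂ] ℂ) →L[ℂ] ℂ => T g) (hf a₀)
  simp only [ContinuousLinearMap.sub_apply, ContinuousLinearMap.comp_apply, h0,
    ContinuousLinearMap.apply_apply, ContinuousLinearMap.zero_apply, map_zero, zero_sub,
    sub_zero, neg_eq_zero, sub_self] at key
  exact hg key

end Aux

section Beurling
variable {S : Type} [Semigroup S] {ω : S → ℝ}
variable {A : Type} [NormedRing A] [NormedAlgebra ℂ A]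

lemma coeff_bound (hω : IsWeight ω) (B : BeurlingStructure S ω A) (p : S) (a : A) :
    ‖B.coeff a p‖ ≤ (ω p)⁻¹ * ‖a‖ := by
  by_cases h : Summable fun s => ‖B.coeff a s‖ * ω s
  · have h1 : ‖B.coeff a p‖ * ω p ≤ ∑' s, ‖B.coeff a s‖ * ω s :=
      Summable.le_tsum h p fun j _ => mul_nonneg (norm_nonneg _) (hω.1 j).le
    rw [← B.norm_eq a] at h1
    rw [inv_mul_eq_div, le_div_iff₀ (hω.1 p)]
    linarith
  · have h2 : ‖a‖ = 0 := by rw [B.norm_eq a, tsum_eq_zero_of_not_summable h]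
    have h3 : a = 0 := norm_eq_zero.mp h2
    rw [h3, map_zero]
    simp

/-- the coefficient functional at `p`, as a continuous linear functional. -/
noncomputable def coeffCLM (hω : IsWeight ω) (B : BeurlingStructure S ω A) (p : S) :
    A →L[ℂ] ℂ :=
  LinearMap.mkContinuous ((LinearMap.proj p).comp B.coeff) (ω p)⁻¹
    fun a => coeff_bound hω B p a

@[simp] lemma coeffCLM_apply (hω : IsWeight ω) (B : BeurlingStructure S ω A) (p : S) (a : A) :
    coeffCLM hω B p a = B.coeff a p := rfl

/-- in a rectangular band, `x*y*z = x*z`. -/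
lemma rect_triple (hrect : ∀ s t : S, s * t * s = s) (x y z : S) :
    x * y * z = x * z := by
  have h1 : z * (x * y) * z = z := hrect z (x * y)
  calc x * y * z = (x * z * x) * y * z := by rw [hrect]
    _ = x * (z * (x * y) * z) := by simp only [mul_assoc]
    _ = x * z := by rw [h1]

lemma delta_mul_eq_left (B : BeurlingStructure S ω A) {p q : S}
    (hpq : ∀ s : S, p * s = q * s) (a : A) : B.delta p * a = B.delta q * a := by
  have h := B.hasSum_coeff a
  have h1 := (ContinuousLinearMap.mul ℂ A (B.delta p)).hasSum h
  have h2 := (ContinuousLinearMap.mul ℂ A (B.delta q)).hasSum h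
  simp only [ContinuousLinearMap.mul_apply'] at h1 h2
  have heq : (fun s => B.delta p * (B.coeff a s • B.delta s))
      = fun s => B.delta q * (B.coeff a s • B.delta s) := by
    funext s
    rw [mul_smul_comm, mul_smul_comm, B.delta_mul, B.delta_mul, hpq]
  rw [heq] at h1
  exact h1.unique h2

lemma delta_mul_eq_right (B : BeurlingStructure S ω A) {p q : S}
    (hpq : ∀ s : S, s * p = s * q) (a : A) : a * B.delta p = a * B.delta q := by
  have h := B.hasSum_coeff a
  have h1 := ((ContinuousLinearMap.mul ℂ A).flip (B.delta p)).hasSum h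
  have h2 := ((ContinuousLinearMap.mul ℂ A).flip (B.delta q)).hasSum h
  simp only [ContinuousLinearMap.flip_apply, ContinuousLinearMap.mul_apply'] at h1 h2
  have heq : (fun s => (B.coeff a s • B.delta s) * B.delta p)
      = fun s => (B.coeff a s • B.delta s) * B.delta q := by
    funext s
    rw [smul_mul_assoc, smul_mul_assoc, B.delta_mul, B.delta_mul, hpq]
  rw [heq] at h1
  exact h1.unique h2

end Beurling
/-- For a rectangular band semigroup `S` with weight `ω`, `ℓ¹(S,ω)` is
amenable iff `S` is a singleton. -/
theorem stmt8 (S : Type) [Semigroup S] [Nonempty S]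
    (hband : ∀ s : S, s * s = s) (hrect : ∀ s t : S, s * t * s = s)
    (ω : S → ℝ) (hω : IsWeight ω)
    (A : Type) [NormedRing A] [NormedAlgebra ℂ A] [CompleteSpace A]
    (B : BeurlingStructure S ω A) :
    IsAmenable A ↔ Subsingleton S := by
  constructor
  · intro ham
    by_contra hns
    rw [not_subsingleton_iff_nontrivial] at hns
    obtain ⟨s, t, hst⟩ := hns.exists_pair_ne
    by_cases h1 : s * t = s
    · by_cases h2 : t * s = s
      · -- then s = t, contradiction
        have h3 : t * s * t = t := hrect t s
        rw [h2] at h3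
        exact hst (h1.symm.trans h3)
      · -- right annihilator: a₀ = δ(t*s) - δ s
        have hpq : ∀ u : S, u * (t * s) = u * s := fun u => by
          rw [← mul_assoc]; exact rect_triple hrect u t s
        have hann : ∀ x : A, x * (B.delta (t * s) - B.delta s) = 0 := by
          intro x
          rw [mul_sub, delta_mul_eq_right B hpq x, sub_self]
        have hg : coeffCLM hω B (t * s) (B.delta (t * s) - B.delta s) ≠ 0 := by
          rw [coeffCLM_apply, map_sub, Pi.sub_apply, B.coeff_delta, B.coeff_delta,
            if_pos rfl, if_neg h2]
          norm_num
        exact not_amenable_right _ hann _ hg ham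
    · -- left annihilator: a₀ = δ(s*t) - δ s
      have hpq : ∀ u : S, (s * t) * u = s * u := fun u => rect_triple hrect s t u
      have hann : ∀ x : A, (B.delta (s * t) - B.delta s) * x = 0 := by
        intro x
        rw [sub_mul, delta_mul_eq_left B hpq x, sub_self]
      have hg : coeffCLM hω B (s * t) (B.delta (s * t) - B.delta s) ≠ 0 := by
        rw [coeffCLM_apply, map_sub, Pi.sub_apply, B.coeff_delta, B.coeff_delta,
          if_pos rfl, if_neg h1]
        norm_num
      exact not_amenable_left _ hann _ hg ham
  · intro hsub
    haveI := hsub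
    intro E _ _ l r hbm D hD
    have s₀ : S := Classical.arbitrary S
    set e := B.delta s₀ with he
    have hee : e * e = e := by rw [he, B.delta_mul, hband]
    have hrep : ∀ a : A, a = B.coeff a s₀ • e := by
      intro a
      have h := B.hasSum_coeff a
      have h2 : HasSum (fun s => B.coeff a s • B.delta s) (B.coeff a s₀ • B.delta s₀) :=
        hasSum_single s₀ fun b hb => absurd (Subsingleton.elim b s₀) hb
      exact h.unique h2
    obtain ⟨hl, hr, hc⟩ := hbm
    set φ := D e with hφ
    have h1 : φ = φ.comp (r e) + φ.comp (l e) := by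
      have h := hD e e; rw [hee] at h; exact h
    have hle : (l e).comp (l e) = l e := by rw [← hl, hee]
    have hre : (r e).comp (r e) = r e := by rw [← hr, hee]
    have hce : (l e).comp (r e) = (r e).comp (l e) := hc e e
    have h2 : φ.comp ((r e).comp (l e)) = 0 := by
      have h3 := congrArg (fun T : E →L[ℂ] ℂ => T.comp (l e)) h1
      simp only [ContinuousLinearMap.add_comp] at h3
      rw [ContinuousLinearMap.comp_assoc, ContinuousLinearMap.comp_assoc, hle] at h3
      exact right_eq_add.mp h3
    have kr : (φ.comp (r e) - φ.comp (l e)).comp (r e) = φ.comp (r e) := by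
      rw [ContinuousLinearMap.sub_comp, ContinuousLinearMap.comp_assoc,
        ContinuousLinearMap.comp_assoc, hre, hce, h2, sub_zero]
    have kl : (φ.comp (r e) - φ.comp (l e)).comp (l e) = -φ.comp (l e) := by
      rw [ContinuousLinearMap.sub_comp, ContinuousLinearMap.comp_assoc,
        ContinuousLinearMap.comp_assoc, h2, hle, zero_sub]
    refine ⟨φ.comp (r e) - φ.comp (l e), fun a => ?_⟩
    obtain ⟨c, hc'⟩ : ∃ c : ℂ, a = c • e := ⟨B.coeff a s₀, hrep a⟩
    subst hc'
    rw [map_smul, map_smul, map_smul, ContinuousLinearMap.comp_smul,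
      ContinuousLinearMap.comp_smul, ← hφ, kr, kl, smul_neg, sub_neg_eq_add]
    calc c • φ = c • (φ.comp (r e) + φ.comp (l e)) := by rw [← h1]
      _ = c • φ.comp (r e) + c • φ.comp (l e) := smul_add c _ _
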